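/- Let λ ⊢ n−1, let T ∈ SYT(λ^□) with δ(T) = n, and let π ∈ S_n be the inverse reading word of T (note π(n) = n). Then for every 0 ≤ k < n: the inverse reading word of the rotated tableau k+T is π c^{−k}, and cDes_rot(k+T) = cDes(π c^{−k}); in particular Des(k+T) = Des(π c^{−k}). -/

import Mathlib

open scoped Classical

noncomputable section

namespace SchurRot

/-! ### Permutations -/

/-- The value of the permutation `π ∈ S_n` (in one-line notation, with positions and
values `1,…,n`) at position `i ∈ [1,n]`. -/
def permVal {n : ℕ} (π : Equiv.Perm (Fin n)) (i : ℕ) : ℕ :=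
  if h : i - 1 < n then ((π ⟨i - 1, h⟩ : Fin n) : ℕ) + 1 else 0

/-- The descent set `Des(π) = {i ∈ [n-1] : π(i) > π(i+1)}`. -/
def DesPerm {n : ℕ} (π : Equiv.Perm (Fin n)) : Finset ℕ :=
  (Finset.Icc 1 (n - 1)).filter fun i => permVal π (i + 1) < permVal π i

/-- The cyclic descent set of `π ∈ S_n`: `Des(π)`, with `n` added iff `π(n) > π(1)`. -/
def cDesPerm {n : ℕ} (π : Equiv.Perm (Fin n)) : Finset ℕ :=
  if permVal π 1 < permVal π n then insert n (DesPerm π) else DesPerm π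

/-- `π ∈ S_n` fixes the letter `n` (so it can be viewed as an element of `S_{n-1}`). -/
def FixesTop {n : ℕ} (π : Equiv.Perm (Fin n)) : Prop :=
  ∀ i : Fin n, (i : ℕ) = n - 1 → π i = i

/-! ### Quasisymmetric and symmetric functions, in variables `x_1, x_2, …`
indexed by positive natural numbers (the variable `x_0` is unused). -/

/-- The fundamental quasisymmetric function `F_{n,D}`, as a formal power series in the
variables `x_i, i ∈ ℕ` (only variables with positive index are used): the coefficient of
a monomial `m` is the number of weakly increasing sequences `1 ≤ i_1 ≤ … ≤ i_n`, strictly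
increasing at positions in `D`, with content monomial `m`. -/
def Fqs (n : ℕ) (D : Finset ℕ) : MvPowerSeries ℕ ℤ :=
  fun m => (Set.ncard {g : Fin n → ℕ |
    (∀ p, 1 ≤ g p) ∧ Monotone g ∧
    (∀ j ∈ D, ∀ (h1 : j - 1 < n) (h2 : j < n), g ⟨j - 1, h1⟩ < g ⟨j, h2⟩) ∧
    (∑ p, Finsupp.single (g p) (1 : ℕ)) = m} : ℤ)

/-- `Q(B) = Σ_{π ∈ B} F_{m, Des(π)}` for a finite set `B` of permutations. -/
def Qset (m : ℕ) {n : ℕ} (B : Finset (Equiv.Perm (Fin n))) : MvPowerSeries ℕ ℤ :=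
  ∑ π ∈ B, Fqs m (DesPerm π)

/-- `Q(B)` for a multiset `B` of permutations, counted with multiplicity. -/
def Qmult (m : ℕ) {n : ℕ} (B : Multiset (Equiv.Perm (Fin n))) : MvPowerSeries ℕ ℤ :=
  (B.map fun π => Fqs m (DesPerm π)).sum

/-- The set `A·C_n = {π c^k : π ∈ A, 0 ≤ k < n}`, where `c = finRotate n` is the
`n`-cycle `(1,2,…,n)`. -/
def ACn {n : ℕ} (A : Finset (Equiv.Perm (Fin n))) : Finset (Equiv.Perm (Fin n)) :=
  (A ×ˢ Finset.range n).image fun p => p.1 * (finRotate n) ^ p.2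

/-- The multiset `A·C_n`, counted with multiplicities. -/
def ACmult {n : ℕ} (A : Multiset (Equiv.Perm (Fin n))) : Multiset (Equiv.Perm (Fin n)) :=
  A.bind fun π => (Multiset.range n).map fun k => π * (finRotate n) ^ k

/-- A formal power series in the variables `x_i, i ∈ ℕ` is a symmetric function if its
coefficients are invariant under every permutation of the variables. -/
def IsSymmFn (f : MvPowerSeries ℕ ℤ) : Prop :=
  ∀ (σ : Equiv.Perm ℕ) (m : ℕ →₀ ℕ),
    MvPowerSeries.coeff (Finsupp.equivMapDomain σ m) f = MvPowerSeries.coeff m f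

/-! ### Tableaux: fillings of an arbitrary finite cell set (in English notation,
cell `(i,j)` is in row `i` (increasing downwards) and column `j`). -/

/-- A semistandard filling of `cells` (entries ≥ 1, weakly increasing along rows,
strictly increasing down columns, `0` outside `cells`). -/
def IsSSYT (cells : Finset (ℕ × ℕ)) (g : ℕ × ℕ → ℕ) : Prop :=
  (∀ c, c ∉ cells → g c = 0) ∧ (∀ c ∈ cells, 1 ≤ g c) ∧
  (∀ a ∈ cells, ∀ b ∈ cells, a.1 = b.1 → a.2 ≤ b.2 → g a ≤ g b) ∧
  (∀ a ∈ cells, ∀ b ∈ cells, a.2 = b.2 → a.1 < b.1 → g a < g b)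

/-- The content monomial of a filling. -/
def contentOf (cells : Finset (ℕ × ℕ)) (g : ℕ × ℕ → ℕ) : ℕ →₀ ℕ :=
  ∑ c ∈ cells, Finsupp.single (g c) 1

/-- The (skew) Schur function of an arbitrary finite cell set: the sum, over all
semistandard fillings, of their content monomials. -/
def schurOf (cells : Finset (ℕ × ℕ)) : MvPowerSeries ℕ ℤ :=
  fun m => (Set.ncard {g : ℕ × ℕ → ℕ | IsSSYT cells g ∧ contentOf cells g = m} : ℤ)

/-- `f` is Schur-positive of degree `m`: a nonnegative integer combination of Schur
functions of partitions of `m` (encoded by a multiset of Young diagrams). -/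
def SchurPositive (m : ℕ) (f : MvPowerSeries ℕ ℤ) : Prop :=
  ∃ M : Multiset YoungDiagram, (∀ μ ∈ M, μ.cells.card = m) ∧
    f = (M.map fun μ => schurOf μ.cells).sum

/-! ### Standard fillings, rotation, reading words -/

/-- A filling of `cells` by the letters `1,…,n`, each used exactly once (and `0`
outside `cells`). -/
def IsFillingF (n : ℕ) (cells : Finset (ℕ × ℕ)) (f : ℕ × ℕ → ℕ) : Prop :=
  Set.BijOn f ↑cells (Set.Icc 1 n) ∧ ∀ c, c ∉ cells → f c = 0

/-- A filling is standard if its rows and columns increase. -/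
def IsStandardF (cells : Finset (ℕ × ℕ)) (f : ℕ × ℕ → ℕ) : Prop :=
  (∀ a ∈ cells, ∀ b ∈ cells, a.1 = b.1 → a.2 < b.2 → f a < f b) ∧
  (∀ a ∈ cells, ∀ b ∈ cells, a.2 = b.2 → a.1 < b.1 → f a < f b)

/-- Addition of `k` modulo `n` on the letters `1,…,n` (with `0` identified with `n`). -/
def rotval (n k e : ℕ) : ℕ := (e + k - 1) % n + 1

/-- Addition of an integer `k` modulo `n` on the letters `1,…,n`. -/
def rotvalZ (n : ℕ) (k : ℤ) (e : ℕ) : ℕ := (((e : ℤ) + k - 1) % (n : ℤ)).toNat + 1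

/-- Apply `φ` to every entry of a filling (keeping `0` outside `cells`);
e.g. `mapEntries cells (rotval n k) T` is the rotated tableau `k + T`. -/
def mapEntries (cells : Finset (ℕ × ℕ)) (φ : ℕ → ℕ) (f : ℕ × ℕ → ℕ) : ℕ × ℕ → ℕ :=
  fun c => if c ∈ cells then φ (f c) else 0

/-- The row containing the entry `e`. -/
def rowOf (cells : Finset (ℕ × ℕ)) (f : ℕ × ℕ → ℕ) (e : ℕ) : ℕ :=
  sInf {i | ∃ j, (i, j) ∈ cells ∧ f (i, j) = e}

/-- The cell containing the entry `e`. -/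
def cellOf (cells : Finset (ℕ × ℕ)) (f : ℕ × ℕ → ℕ) (e : ℕ) : ℕ × ℕ :=
  (rowOf cells f e,
    sInf {j | (rowOf cells f e, j) ∈ cells ∧ f (rowOf cells f e, j) = e})

/-- The cyclic descent set of a (rotated) filling of size `n`:
`{i ∈ [n] : i+1 (mod n) lies in a strictly lower row than i}`. -/
def cDesRot (n : ℕ) (cells : Finset (ℕ × ℕ)) (f : ℕ × ℕ → ℕ) : Finset ℕ :=
  (Finset.Icc 1 n).filter fun i => rowOf cells f i < rowOf cells f (rotval n 1 i)

/-- The descent set of a filling of size `n`: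
`{i ∈ [n-1] : i+1 lies in a strictly lower row than i}`. -/
def DesTab (n : ℕ) (cells : Finset (ℕ × ℕ)) (f : ℕ × ℕ → ℕ) : Finset ℕ :=
  (Finset.Icc 1 (n - 1)).filter fun i => rowOf cells f i < rowOf cells f (i + 1)

/-- `a` comes before `b` in reading order (rows left to right, bottom row first). -/
def readBefore (a b : ℕ × ℕ) : Prop :=
  b.1 < a.1 ∨ (a.1 = b.1 ∧ a.2 < b.2)

/-- The (1-indexed) position of the cell `c` in the reading order of `cells`. -/
def posInRead (cells : Finset (ℕ × ℕ)) (c : ℕ × ℕ) : ℕ :=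
  (cells.filter fun c' => readBefore c' c).card + 1

/-- The value at `e` of the inverse of the reading word of the filling `f`, i.e. the
position of the entry `e` in the reading word. -/
def invReadVal (cells : Finset (ℕ × ℕ)) (f : ℕ × ℕ → ℕ) (e : ℕ) : ℕ :=
  posInRead cells (cellOf cells f e)

/-- `A_λ` (for `cells` the diagram of `λ ⊢ m`): the set of permutations in `S_m` that are
inverse reading words of standard Young tableaux of shape `λ`. -/
def invWordSet (m : ℕ) (cells : Finset (ℕ × ℕ)) : Finset (Equiv.Perm (Fin m)) :=
  Finset.univ.filter fun π => ∃ f : ℕ × ℕ → ℕ,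
    IsFillingF m cells f ∧ IsStandardF cells f ∧
    ∀ e ∈ Finset.Icc 1 m, permVal π e = invReadVal cells f e

/-! ### The jeu-de-taquin type straightening algorithms -/

/-- The entry `i` is short: some entry immediately above it or immediately to its left
is larger. -/
def IsShort (cells : Finset (ℕ × ℕ)) (f : ℕ × ℕ → ℕ) (i : ℕ) : Prop :=
  ∃ c ∈ cells, f c = i ∧
    ((1 ≤ c.1 ∧ (c.1 - 1, c.2) ∈ cells ∧ i < f (c.1 - 1, c.2)) ∨
     (1 ≤ c.2 ∧ (c.1, c.2 - 1) ∈ cells ∧ i < f (c.1, c.2 - 1)))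

/-- The entry `i` is tall: some entry immediately below it or immediately to its right
is smaller. -/
def IsTall (cells : Finset (ℕ × ℕ)) (f : ℕ × ℕ → ℕ) (i : ℕ) : Prop :=
  ∃ c ∈ cells, f c = i ∧
    (((c.1 + 1, c.2) ∈ cells ∧ f (c.1 + 1, c.2) < i) ∨
     ((c.1, c.2 + 1) ∈ cells ∧ f (c.1, c.2 + 1) < i))

def shorts (n : ℕ) (cells : Finset (ℕ × ℕ)) (f : ℕ × ℕ → ℕ) : Finset ℕ :=
  (Finset.Icc 1 n).filter fun i => IsShort cells f i

def talls (n : ℕ) (cells : Finset (ℕ × ℕ)) (f : ℕ × ℕ → ℕ) : Finset ℕ :=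
  (Finset.Icc 1 n).filter fun i => IsTall cells f i

/-- One elementary step of `jdt`: take the minimal short entry `i` and switch it with
the larger of the entries immediately above it and immediately to its left. -/
def stepFun (n : ℕ) (cells : Finset (ℕ × ℕ)) (f : ℕ × ℕ → ℕ) : ℕ × ℕ → ℕ :=
  if h : (shorts n cells f).Nonempty then
    let i := (shorts n cells f).min' h
    let c := cellOf cells f i
    let av := if 1 ≤ c.1 ∧ (c.1 - 1, c.2) ∈ cells then f (c.1 - 1, c.2) else 0
    let lv := if 1 ≤ c.2 ∧ (c.1, c.2 - 1) ∈ cells then f (c.1, c.2 - 1) else 0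
    mapEntries cells (Equiv.swap i (max av lv)) f
  else f

/-- One elementary step of `ijdt`: take the maximal tall entry `i` and switch it with
the smaller of the entries immediately below it and immediately to its right. -/
def istepFun (n : ℕ) (cells : Finset (ℕ × ℕ)) (f : ℕ × ℕ → ℕ) : ℕ × ℕ → ℕ :=
  if h : (talls n cells f).Nonempty then
    let i := (talls n cells f).max' h
    let c := cellOf cells f i
    let bv := if (c.1 + 1, c.2) ∈ cells then f (c.1 + 1, c.2) else n + 1
    let rv := if (c.1, c.2 + 1) ∈ cells then f (c.1, c.2 + 1) else n + 1
    mapEntries cells (Equiv.swap i (min bv rv)) f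
  else f

/-- The straightening `jdt`: repeat the elementary step until the filling is standard. -/
def jdtFun (n : ℕ) (cells : Finset (ℕ × ℕ)) (f : ℕ × ℕ → ℕ) : ℕ × ℕ → ℕ :=
  if h : ∃ m, IsStandardF cells ((stepFun n cells)^[m] f) then
    (stepFun n cells)^[Nat.find h] f
  else f

/-- The straightening `ijdt`: repeat the reverse elementary step until the filling is
standard. -/
def ijdtFun (n : ℕ) (cells : Finset (ℕ × ℕ)) (f : ℕ × ℕ → ℕ) : ℕ × ℕ → ℕ :=
  if h : ∃ m, IsStandardF cells ((istepFun n cells)^[m] f) then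
    (istepFun n cells)^[Nat.find h] f
  else f

/-! ### The shape `λ^□` -/

/-- The cell of the disconnected box of `λ^□`, strictly north and strictly east of `λ`. -/
def boxCell (lam : YoungDiagram) : ℕ × ℕ := (0, lam.rowLen 0)

/-- The skew shape `λ^□`: `λ` (shifted one row down) together with one disconnected box
at its upper right corner. -/
def boxShape (lam : YoungDiagram) : Finset (ℕ × ℕ) :=
  insert (boxCell lam) (lam.cells.image fun c => (c.1 + 1, c.2))

/-- `δ(P)`: the entry of the disconnected box of a filling of `λ^□`. -/
def deltaOf (lam : YoungDiagram) (f : ℕ × ℕ → ℕ) : ℕ := f (boxCell lam)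

/-- The inverse of `jdt` on `SYT(λ^□)`: `jdt⁻¹(P) = δ(P) + ijdt(-δ(P) + P)`. -/
def jdtInvFun (n : ℕ) (lam : YoungDiagram) (P : ℕ × ℕ → ℕ) : ℕ × ℕ → ℕ :=
  mapEntries (boxShape lam) (rotval n (deltaOf lam P))
    (ijdtFun n (boxShape lam)
      (mapEntries (boxShape lam) (rotval n (n - deltaOf lam P)) P))

/-- The cyclic descent set of `P ∈ SYT(λ^□)`: `cDes(P) = cDes_rot(jdt⁻¹(P))`. -/
def cDesBox (n : ℕ) (lam : YoungDiagram) (P : ℕ × ℕ → ℕ) : Finset ℕ :=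
  cDesRot n (boxShape lam) (jdtInvFun n lam P)

/-- The restriction of `f` to the entries in `S` is standard: there are no two entries
in `S` in which the smaller one lies weakly south and weakly east of the larger one. -/
def RestrictedStd (cells : Finset (ℕ × ℕ)) (f : ℕ × ℕ → ℕ) (S : Finset ℕ) : Prop :=
  ∀ a ∈ cells, ∀ b ∈ cells, f a ∈ S → f b ∈ S →
    a.1 ≤ b.1 → a.2 ≤ b.2 → a ≠ b → f a < f b

end SchurRot


noncomputable section
namespace SchurRot


/-! ### Auxiliary lemmas -/

lemma one_le_rotval (n k e : ℕ) : 1 ≤ rotval n k e := by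
  unfold rotval; omega

lemma rotval_le (n k e : ℕ) (hn : 0 < n) : rotval n k e ≤ n := by
  unfold rotval
  have := Nat.mod_lt (e + k - 1) hn
  omega

lemma rotval_rotval (n a b e : ℕ) (he : 1 ≤ e) :
    rotval n a (rotval n b e) = rotval n (a + b) e := by
  unfold rotval
  have h2 : (e + b - 1) % n + 1 + a - 1 = (e + b - 1) % n + a := by omega
  rw [h2, Nat.mod_add_mod]
  have h3 : e + b - 1 + a = e + (a + b) - 1 := by omega
  rw [h3]

lemma rotval_n (n e : ℕ) (h1 : 1 ≤ e) (h2 : e ≤ n) : rotval n n e = e := by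
  unfold rotval
  have h : e + n - 1 = (e - 1) + n := by omega
  rw [h, Nat.add_mod_right, Nat.mod_eq_of_lt (by omega)]
  omega

lemma rotval_invl (n k e : ℕ) (hk : k ≤ n) (h1 : 1 ≤ e) (h2 : e ≤ n) :
    rotval n (n - k) (rotval n k e) = e := by
  rw [rotval_rotval n _ _ _ h1]
  have h : n - k + k = n := by omega
  rw [h, rotval_n n e h1 h2]

lemma rotval_invr (n k e : ℕ) (hk : k ≤ n) (h1 : 1 ≤ e) (h2 : e ≤ n) :
    rotval n k (rotval n (n - k) e) = e := by
  rw [rotval_rotval n _ _ _ h1]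
  have h : k + (n - k) = n := by omega
  rw [h, rotval_n n e h1 h2]

lemma rotval_one_of_lt {n i : ℕ} (h1 : 1 ≤ i) (h2 : i < n) : rotval n 1 i = i + 1 := by
  unfold rotval
  have h0 : i + 1 - 1 = i := by omega
  rw [h0, Nat.mod_eq_of_lt h2]

lemma rotval_one_self {n : ℕ} (hn : 0 < n) : rotval n 1 n = 1 := by
  unfold rotval
  have h0 : n + 1 - 1 = n := by omega
  rw [h0, Nat.mod_self]

lemma readBefore_trans {a b c : ℕ × ℕ} (h1 : readBefore a b) (h2 : readBefore b c) :
    readBefore a c := by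
  unfold readBefore at *; omega

lemma readBefore_irrefl (a : ℕ × ℕ) : ¬ readBefore a a := by
  unfold readBefore; omega

lemma readBefore_total {a b : ℕ × ℕ} (h : a ≠ b) : readBefore a b ∨ readBefore b a := by
  obtain ⟨a1, a2⟩ := a; obtain ⟨b1, b2⟩ := b
  simp only [ne_eq, Prod.mk.injEq, not_and] at h
  unfold readBefore
  dsimp only
  omega

lemma posInRead_lt_of_readBefore {cells : Finset (ℕ × ℕ)} {a b : ℕ × ℕ}
    (ha : a ∈ cells) (h : readBefore a b) :
    posInRead cells a < posInRead cells b := by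
  unfold posInRead
  have hss : cells.filter (fun c' => readBefore c' a) ⊂
      cells.filter (fun c' => readBefore c' b) := by
    rw [Finset.ssubset_def]
    constructor
    · intro c hc
      rw [Finset.mem_filter] at hc ⊢
      exact ⟨hc.1, readBefore_trans hc.2 h⟩
    · intro hsub
      have hma : a ∈ cells.filter (fun c' => readBefore c' b) :=
        Finset.mem_filter.mpr ⟨ha, h⟩
      have hcontr := hsub hma
      rw [Finset.mem_filter] at hcontr
      exact readBefore_irrefl a hcontr.2
  have := Finset.card_lt_card hss
  omega

lemma cellOf_spec {cells : Finset (ℕ × ℕ)} {f : ℕ × ℕ → ℕ} {e : ℕ} {c : ℕ × ℕ}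
    (hc : c ∈ cells) (he : f c = e) (huniq : ∀ c', f c' = e → c' = c) :
    rowOf cells f e = c.1 ∧ cellOf cells f e = c := by
  obtain ⟨c1, c2⟩ := c
  have hrow : rowOf cells f e = c1 := by
    unfold rowOf
    have hset : {i | ∃ j, (i, j) ∈ cells ∧ f (i, j) = e} = {c1} := by
      ext i
      simp only [Set.mem_setOf_eq, Set.mem_singleton_iff]
      constructor
      · rintro ⟨j, _, hval⟩
        have h := huniq (i, j) hval
        exact congrArg Prod.fst h
      · rintro rfl
        exact ⟨c2, hc, he⟩
    rw [hset, csInf_singleton]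
  refine ⟨hrow, ?_⟩
  unfold cellOf
  rw [hrow]
  have hset : {j | (c1, j) ∈ cells ∧ f (c1, j) = e} = {c2} := by
    ext j
    simp only [Set.mem_setOf_eq, Set.mem_singleton_iff]
    constructor
    · rintro ⟨_, hval⟩
      have h := huniq (c1, j) hval
      exact congrArg Prod.snd h
    · rintro rfl
      exact ⟨hc, he⟩
  rw [hset, csInf_singleton]

lemma finRotate_pow_apply (n m : ℕ) (j : Fin (n + 1)) :
    ((finRotate (n + 1)) ^ m) j = ⟨((j : ℕ) + m) % (n + 1), Nat.mod_lt _ (Nat.succ_pos n)⟩ := by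
  induction m with
  | zero =>
    simp only [pow_zero, Equiv.Perm.coe_one, id_eq]
    exact Fin.ext (by simp [Nat.mod_eq_of_lt j.isLt])
  | succ m ih =>
    rw [pow_succ', Equiv.Perm.mul_apply, ih, finRotate_succ_apply]
    apply Fin.ext
    rw [Fin.add_def]
    simp only [Fin.val_one']
    rw [← Nat.add_mod]
    congr 1

lemma permVal_mul_rotate {n : ℕ} (π : Equiv.Perm (Fin n)) (k e : ℕ)
    (hk : k < n) (h1 : 1 ≤ e) (h2 : e ≤ n) :
    permVal (π * ((finRotate n)⁻¹) ^ k) e = permVal π (rotval n (n - k) e) := by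
  have hn : 0 < n := by omega
  obtain ⟨n', rfl⟩ : ∃ n', n = n' + 1 := ⟨n - 1, by omega⟩
  unfold permVal
  have hd1 : e - 1 < n' + 1 := by omega
  have hd2 : rotval (n' + 1) (n' + 1 - k) e - 1 < n' + 1 := by
    have := rotval_le (n' + 1) (n' + 1 - k) e hn
    have := one_le_rotval (n' + 1) (n' + 1 - k) e
    omega
  rw [dif_pos hd1, dif_pos hd2, Equiv.Perm.mul_apply]
  have key : (((finRotate (n' + 1))⁻¹) ^ k) ⟨e - 1, hd1⟩ =
      ⟨rotval (n' + 1) (n' + 1 - k) e - 1, hd2⟩ := by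
    rw [inv_pow, Equiv.Perm.inv_eq_iff_eq, finRotate_pow_apply]
    apply Fin.ext
    show e - 1 = (rotval (n' + 1) (n' + 1 - k) e - 1 + k) % (n' + 1)
    have harg : rotval (n' + 1) (n' + 1 - k) e - 1 = (e - 1 + (n' + 1 - k)) % (n' + 1) := by
      unfold rotval
      have h : e + (n' + 1 - k) - 1 = e - 1 + (n' + 1 - k) := by omega
      rw [h]
      omega
    rw [harg, Nat.mod_add_mod]
    have h : e - 1 + (n' + 1 - k) + k = (e - 1) + (n' + 1) := by omega
    rw [h, Nat.add_mod_right, Nat.mod_eq_of_lt hd1]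
  rw [key]

lemma boxCell_mem (lam : YoungDiagram) : boxCell lam ∈ boxShape lam :=
  Finset.mem_insert_self _ _

lemma row_zero_eq_boxCell (lam : YoungDiagram) {c : ℕ × ℕ}
    (hc : c ∈ boxShape lam) (h0 : c.1 = 0) : c = boxCell lam := by
  unfold boxShape at hc
  rcases Finset.mem_insert.mp hc with h | h
  · exact h
  · obtain ⟨d, _, hd⟩ := Finset.mem_image.mp h
    rw [← hd] at h0
    simp at h0

lemma filling_unique {n : ℕ} {cells : Finset (ℕ × ℕ)} {T : ℕ × ℕ → ℕ}
    (hT : IsFillingF n cells T) {e : ℕ} (h1 : 1 ≤ e) (h2 : e ≤ n) :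
    ∃ c, c ∈ cells ∧ T c = e ∧ ∀ c', T c' = e → c' = c := by
  obtain ⟨c, hc, hTc⟩ := hT.1.2.2 (Set.mem_Icc.mpr ⟨h1, h2⟩)
  have hc' : c ∈ cells := hc
  refine ⟨c, hc', hTc, fun c' hc'' => ?_⟩
  by_cases hmem : c' ∈ cells
  · exact hT.1.2.1 hmem hc (by rw [hc'', hTc])
  · have := hT.2 c' hmem; omega

lemma mapped_invRead {n k : ℕ} (hk : k < n) {cells : Finset (ℕ × ℕ)} {T : ℕ × ℕ → ℕ}
    (hT : IsFillingF n cells T) {e : ℕ} (h1 : 1 ≤ e) (h2 : e ≤ n) :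
    rowOf cells (mapEntries cells (rotval n k) T) e = rowOf cells T (rotval n (n - k) e) ∧
    invReadVal cells (mapEntries cells (rotval n k) T) e
      = invReadVal cells T (rotval n (n - k) e) := by
  have hn : 0 < n := by omega
  have he'1 : 1 ≤ rotval n (n - k) e := one_le_rotval _ _ _
  have he'2 : rotval n (n - k) e ≤ n := rotval_le _ _ _ hn
  obtain ⟨c, hc, hTc, huniq⟩ := filling_unique hT he'1 he'2
  have hmapc : mapEntries cells (rotval n k) T c = e := by
    unfold mapEntries
    rw [if_pos hc, hTc]
    exact rotval_invr n k e (le_of_lt hk) h1 h2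
  have huniq' : ∀ c', mapEntries cells (rotval n k) T c' = e → c' = c := by
    intro c' hc'
    by_cases hmem : c' ∈ cells
    · unfold mapEntries at hc'
      rw [if_pos hmem] at hc'
      apply huniq
      have hrange : T c' ∈ Set.Icc 1 n := hT.1.1 hmem
      rw [Set.mem_Icc] at hrange
      have h := rotval_invl n k (T c') (le_of_lt hk) hrange.1 hrange.2
      rw [← h, hc']
    · unfold mapEntries at hc'
      rw [if_neg hmem] at hc'
      omega
  obtain ⟨hr1, hc1⟩ := cellOf_spec hc hmapc huniq'
  obtain ⟨hr2, hc2⟩ := cellOf_spec hc hTc huniq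
  refine ⟨by rw [hr1, hr2], ?_⟩
  unfold invReadVal
  rw [hc1, hc2]

lemma row_lt_iff_pos_lt {n : ℕ} {lam : YoungDiagram} {T : ℕ × ℕ → ℕ}
    (hT : IsFillingF n (boxShape lam) T) (hstd : IsStandardF (boxShape lam) T)
    (hdelta : deltaOf lam T = n) {a b : ℕ}
    (ha1 : 1 ≤ a) (ha2 : a ≤ n) (hb : b = rotval n 1 a) :
    (rowOf (boxShape lam) T a < rowOf (boxShape lam) T b ↔
      invReadVal (boxShape lam) T b < invReadVal (boxShape lam) T a) := by
  have hn : 0 < n := by omega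
  have hb1 : 1 ≤ b := hb ▸ one_le_rotval _ _ _
  have hb2 : b ≤ n := hb ▸ rotval_le _ _ _ hn
  by_cases hab : a = b
  · rw [hab]; simp
  obtain ⟨ca, hca, hTca, hua⟩ := filling_unique hT ha1 ha2
  obtain ⟨cb, hcb, hTcb, hub⟩ := filling_unique hT hb1 hb2
  have hcab : ca ≠ cb := fun h => hab (by rw [← hTca, ← hTcb, h])
  obtain ⟨hra, hcella⟩ := cellOf_spec hca hTca hua
  obtain ⟨hrb, hcellb⟩ := cellOf_spec hcb hTcb hub
  rw [hra, hrb]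
  unfold invReadVal
  rw [hcella, hcellb]
  rcases Nat.lt_trichotomy ca.1 cb.1 with hlt | heq | hgt
  · constructor
    · intro _
      exact posInRead_lt_of_readBefore hcb (Or.inl hlt)
    · intro _
      exact hlt
  · have hor : ca.2 < cb.2 := by
      by_cases han : a = n
      · exfalso
        have hTbox : T (boxCell lam) = a := by
          have h : deltaOf lam T = T (boxCell lam) := rfl
          omega
        have hcaBox : boxCell lam = ca := hua _ hTbox
        have hb0 : cb.1 = 0 := by
          rw [← heq, ← hcaBox]
          rfl
        have hcbBox := row_zero_eq_boxCell lam hcb hb0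
        exact hcab (hcbBox.trans hcaBox).symm
      · have hban : b = a + 1 := by
          rw [hb, rotval_one_of_lt ha1 (by omega)]
        rcases Nat.lt_trichotomy ca.2 cb.2 with h | h | h
        · exact h
        · exact absurd (Prod.ext_iff.mpr ⟨heq, h⟩) hcab
        · exfalso
          have := hstd.1 cb hcb ca hca heq.symm h
          omega
    constructor
    · intro h
      exact absurd h (by omega)
    · intro h
      exfalso
      have := posInRead_lt_of_readBefore hca (Or.inr ⟨heq, hor⟩)
      omega
  · constructor
    · intro h
      exact absurd h (by omega)
    · intro h
      exfalso
      have := posInRead_lt_of_readBefore hca (Or.inl hgt)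
      omega

/-- Let `λ ⊢ n-1`, `T ∈ SYT(λ^□)` with `δ(T) = n`, and let `π ∈ S_n` be
the inverse reading word of `T`. Then for every `0 ≤ k < n`: the inverse reading word of
the rotated tableau `k+T` is `π c^{-k}`, and `cDes_rot(k+T) = cDes(π c^{-k})`; in
particular `Des(k+T) = Des(π c^{-k})`. -/
theorem invReadWord_of_rotated (n : ℕ) (lam : YoungDiagram)
    (hlam : lam.cells.card = n - 1)
    (T : ℕ × ℕ → ℕ) (hT : IsFillingF n (boxShape lam) T)
    (hstd : IsStandardF (boxShape lam) T) (hdelta : deltaOf lam T = n)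
    (π : Equiv.Perm (Fin n))
    (hπ : ∀ e ∈ Finset.Icc 1 n, permVal π e = invReadVal (boxShape lam) T e)
    (k : ℕ) (hk : k < n) :
    (∀ e ∈ Finset.Icc 1 n,
      permVal (π * ((finRotate n)⁻¹) ^ k) e =
        invReadVal (boxShape lam) (mapEntries (boxShape lam) (rotval n k) T) e) ∧
    cDesRot n (boxShape lam) (mapEntries (boxShape lam) (rotval n k) T) =
      cDesPerm (π * ((finRotate n)⁻¹) ^ k) ∧
    DesTab n (boxShape lam) (mapEntries (boxShape lam) (rotval n k) T) =
      DesPerm (π * ((finRotate n)⁻¹) ^ k) := by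
  have hn : 0 < n := by
    have h := hT.1.1 (boxCell_mem lam)
    rw [Set.mem_Icc] at h
    omega
  have part1 : ∀ e ∈ Finset.Icc 1 n,
      permVal (π * ((finRotate n)⁻¹) ^ k) e =
        invReadVal (boxShape lam) (mapEntries (boxShape lam) (rotval n k) T) e := by
    intro e he
    rw [Finset.mem_Icc] at he
    rw [permVal_mul_rotate π k e hk he.1 he.2]
    rw [hπ (rotval n (n - k) e)
      (Finset.mem_Icc.mpr ⟨one_le_rotval _ _ _, rotval_le _ _ _ hn⟩)]
    exact ((mapped_invRead hk hT he.1 he.2).2).symm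
  have keyiff : ∀ a, 1 ≤ a → a ≤ n →
      (rowOf (boxShape lam) (mapEntries (boxShape lam) (rotval n k) T) a <
        rowOf (boxShape lam) (mapEntries (boxShape lam) (rotval n k) T) (rotval n 1 a) ↔
       invReadVal (boxShape lam) (mapEntries (boxShape lam) (rotval n k) T) (rotval n 1 a) <
        invReadVal (boxShape lam) (mapEntries (boxShape lam) (rotval n k) T) a) := by
    intro a h1 h2
    have hb1 : 1 ≤ rotval n 1 a := one_le_rotval _ _ _
    have hb2 : rotval n 1 a ≤ n := rotval_le _ _ _ hn
    rw [(mapped_invRead hk hT h1 h2).1, (mapped_invRead hk hT hb1 hb2).1,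
        (mapped_invRead hk hT h1 h2).2, (mapped_invRead hk hT hb1 hb2).2]
    apply row_lt_iff_pos_lt hT hstd hdelta (one_le_rotval n (n - k) a)
      (rotval_le n (n - k) a hn)
    rw [rotval_rotval n (n - k) 1 a h1, rotval_rotval n 1 (n - k) a h1,
      Nat.add_comm (n - k) 1]
  have part3 : DesTab n (boxShape lam) (mapEntries (boxShape lam) (rotval n k) T) =
      DesPerm (π * ((finRotate n)⁻¹) ^ k) := by
    unfold DesTab DesPerm
    apply Finset.filter_congr
    intro i hi
    rw [Finset.mem_Icc] at hi
    have hrot : rotval n 1 i = i + 1 := rotval_one_of_lt hi.1 (by omega)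
    have e1 := part1 i (Finset.mem_Icc.mpr ⟨hi.1, by omega⟩)
    have e2 := part1 (i + 1) (Finset.mem_Icc.mpr ⟨by omega, by omega⟩)
    rw [e1, e2, ← hrot]
    exact keyiff i hi.1 (by omega)
  have hnotmem : n ∉ DesPerm (π * ((finRotate n)⁻¹) ^ k) := by
    intro h
    rw [DesPerm, Finset.mem_filter, Finset.mem_Icc] at h
    omega
  have hcond : (rowOf (boxShape lam) (mapEntries (boxShape lam) (rotval n k) T) n <
      rowOf (boxShape lam) (mapEntries (boxShape lam) (rotval n k) T) (rotval n 1 n)) ↔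
      permVal (π * ((finRotate n)⁻¹) ^ k) 1 < permVal (π * ((finRotate n)⁻¹) ^ k) n := by
    rw [keyiff n hn le_rfl, rotval_one_self hn,
      ← part1 1 (Finset.mem_Icc.mpr ⟨le_rfl, hn⟩),
      ← part1 n (Finset.mem_Icc.mpr ⟨hn, le_rfl⟩)]
  have part2 : cDesRot n (boxShape lam) (mapEntries (boxShape lam) (rotval n k) T) =
      cDesPerm (π * ((finRotate n)⁻¹) ^ k) := by
    ext i
    unfold cDesRot cDesPerm
    by_cases hin : i = n
    · subst hin
      simp only [Finset.mem_filter, Finset.mem_Icc]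
      split_ifs with hcase
      · constructor
        · intro _
          exact Finset.mem_insert_self _ _
        · intro _
          exact ⟨⟨hn, le_rfl⟩, hcond.mpr hcase⟩
      · constructor
        · intro h
          exact absurd (hcond.mp h.2) hcase
        · intro h
          exact absurd h hnotmem
    · have hmem_iff : i ∈ (if permVal (π * ((finRotate n)⁻¹) ^ k) 1 <
          permVal (π * ((finRotate n)⁻¹) ^ k) n then
          insert n (DesPerm (π * ((finRotate n)⁻¹) ^ k)) else
          DesPerm (π * ((finRotate n)⁻¹) ^ k)) ↔
          i ∈ DesPerm (π * ((finRotate n)⁻¹) ^ k) := by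
        split_ifs
        · simp [Finset.mem_insert, hin]
        · exact Iff.rfl
      rw [hmem_iff, ← part3]
      unfold DesTab
      simp only [Finset.mem_filter, Finset.mem_Icc]
      constructor
      · rintro ⟨⟨h1, h2⟩, hc⟩
        have hrot : rotval n 1 i = i + 1 := rotval_one_of_lt h1 (by omega)
        exact ⟨⟨h1, by omega⟩, by rw [← hrot]; exact hc⟩
      · rintro ⟨⟨h1, h2⟩, hc⟩
        have hrot : rotval n 1 i = i + 1 := rotval_one_of_lt h1 (by omega)
        exact ⟨⟨h1, by omega⟩, by rw [hrot]; exact hc⟩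
  exact ⟨part1, part2, part3⟩

end SchurRot
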